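/- For every n ≥ 4, the zero loci of the annihilator ideals in ℂ^{C(n,2)} satisfy Z(Ann_S(K_n)) ⊆ Z(Ann_S(𝔅_n)) = Z(Ann_S(𝔅_n')), where for an ideal J ⊆ S, Z(J) = { p ∈ ℂ^{C(n,2)} : f(p) = 0 for all f ∈ J } (points of ℂ^{C(n,2)} indexed by the pairs (i,j), 1 ≤ j < i ≤ n). -/
import Mathlib


/-- Index set for the variables `x_{ij}` (`1 ≤ j < i ≤ n`, `0`-indexed). -/
abbrev PIdx (n : ℕ) := { p : Fin n × Fin n // p.2 < p.1 }

/-- The polynomial ring `S = ℂ[x_{ij} : j < i]`. -/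
abbrev Sn (n : ℕ) := MvPolynomial (PIdx n) ℂ

/-- Index set for the basis `r_{ijk}` (`k < j < i`). -/
abbrev TIdx (n : ℕ) := { t : Fin n × Fin n × Fin n // t.2.2 < t.2.1 ∧ t.2.1 < t.1 }

/-- The free `S`-module `F` with basis `{r_{ijk} : k < j < i}`. -/
abbrev Fn (n : ℕ) := TIdx n → Sn n

/-- The variable `x_{ij}` (for `j < i`). -/
noncomputable def Xv (n : ℕ) (i j : Fin n) (h : j < i) : Sn n := MvPolynomial.X ⟨(i, j), h⟩

/-- The basis element `r_{ijk}` of `F` (for `k < j < i`). -/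
noncomputable def rGen (n : ℕ) (i j k : Fin n) (h1 : k < j) (h2 : j < i) : Fn n :=
  Pi.single ⟨(i, j, k), h1, h2⟩ 1

/-- The generating set `B = ∪ B_{ijk}` of relations (`g₁,…,g₄, h₁,…,h₈` of the paper):
for each `k < j < i` and admissible `l₁ < k < l₂ < j < l₃ < i < l₄` and pairs `t < s`
with `{s,t} ∩ {i,j,k} = ∅`. -/
noncomputable def BSet (n : ℕ) : Set (Fn n) :=
  { w | ∃ (i j k : Fin n) (hkj : k < j) (hji : j < i),
    -- g₁
    (∃ (l : Fin n) (h1 : k < l) (h2 : l < j),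
      w = (-Xv n j k hkj - Xv n l k h1) • rGen n i j l h2 hji
          + Xv n j l h2 • rGen n i j k hkj hji) ∨
    -- g₂
    (∃ (l : Fin n) (_h1 : k < l) (h2 : l < j),
      w = Xv n j k hkj • rGen n i j l h2 hji
          + Xv n i l (h2.trans hji) • rGen n i j k hkj hji) ∨
    -- g₃
    (∃ (l : Fin n) (h1 : j < l) (h2 : l < i),
      w = -(Xv n j k hkj • rGen n i l j h1 h2)
          + Xv n i l h2 • rGen n i j k hkj hji) ∨
    -- g₄
    (∃ (l : Fin n) (h1 : i < l),
      w = Xv n j k hkj • rGen n l i j hji h1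
          + Xv n l i h1 • rGen n i j k hkj hji) ∨
    -- h₁
    (∃ (l : Fin n) (h1 : l < k),
      w = (Xv n i l (h1.trans (hkj.trans hji)) + Xv n j l (h1.trans hkj) + Xv n k l h1) •
          rGen n i j k hkj hji) ∨
    -- h₂
    (w = (Xv n i k (hkj.trans hji) + Xv n j k hkj) • rGen n i j k hkj hji) ∨
    -- h₃
    (∃ (l : Fin n) (h1 : k < l) (_h2 : l < j), w = Xv n l k h1 • rGen n i j k hkj hji) ∨
    -- h₄
    (∃ (l : Fin n) (h1 : j < l) (_h2 : l < i),
      w = Xv n l k (hkj.trans h1) • rGen n i j k hkj hji) ∨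
    -- h₅
    (∃ (l : Fin n) (h1 : j < l) (_h2 : l < i), w = Xv n l j h1 • rGen n i j k hkj hji) ∨
    -- h₆
    (∃ (l : Fin n) (h1 : i < l),
      w = Xv n l k ((hkj.trans hji).trans h1) • rGen n i j k hkj hji) ∨
    -- h₇
    (∃ (l : Fin n) (h1 : i < l), w = Xv n l j (hji.trans h1) • rGen n i j k hkj hji) ∨
    -- h₈
    (∃ (s t : Fin n) (h : t < s), s ≠ i ∧ s ≠ j ∧ s ≠ k ∧ t ≠ i ∧ t ≠ j ∧ t ≠ k ∧
      w = Xv n s t h • rGen n i j k hkj hji) }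

/-- The `S`-submodule of `F` spanned by `B`. -/
noncomputable def spanB (n : ℕ) : Submodule (Sn n) (Fn n) := Submodule.span (Sn n) (BSet n)

/-- The infinitesimal Alexander invariant `𝔅ₙ = F / span_S(B)` of `PΣₙ⁺`. -/
abbrev Bn (n : ℕ) := Fn n ⧸ spanB n

/-- The extra monomial generators `E = { x_{kp}·r_{ijk} : p < k < j < i }`. -/
noncomputable def ESet (n : ℕ) : Set (Fn n) :=
  { w | ∃ (i j k : Fin n) (hkj : k < j) (hji : j < i) (p : Fin n) (hp : p < k),
      w = Xv n k p hp • rGen n i j k hkj hji }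

/-- The `S`-submodule of `F` spanned by `B ∪ E`. -/
noncomputable def spanB' (n : ℕ) : Submodule (Sn n) (Fn n) :=
  Submodule.span (Sn n) (BSet n ∪ ESet n)

/-- The quotient module `𝔅ₙ' = F / span_S(B ∪ E)`. -/
abbrev Bn' (n : ℕ) := Fn n ⧸ spanB' n

/-- Index set for the basis `e_{ijkl}` (`l < k < j < i`). -/
abbrev QIdx (n : ℕ) :=
  { q : Fin n × Fin n × Fin n × Fin n //
      q.2.2.2 < q.2.2.1 ∧ q.2.2.1 < q.2.1 ∧ q.2.1 < q.1 }

/-- The free `S`-module `F'` with basis `{e_{ijkl} : l < k < j < i}`. -/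
abbrev F'n (n : ℕ) := QIdx n → Sn n

/-- The basis element `e_{ijkl}` of `F'`. -/
noncomputable def eGen (n : ℕ) (i j k l : Fin n) (h1 : l < k) (h2 : k < j) (h3 : j < i) :
    F'n n :=
  Pi.single ⟨(i, j, k, l), h1, h2, h3⟩ 1

/-- The generating set `{ x_{st}·e_{ijkl} : t < s, (s,t) ≠ (i,j) }`. -/
noncomputable def JSet (n : ℕ) : Set (F'n n) :=
  { w | ∃ (i j k l : Fin n) (h1 : l < k) (h2 : k < j) (h3 : j < i)
      (s t : Fin n) (hts : t < s), (s, t) ≠ (i, j) ∧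
      w = Xv n s t hts • eGen n i j k l h1 h2 h3 }

/-- The `S`-submodule of `F'` spanned by the set above. -/
noncomputable def spanJ (n : ℕ) : Submodule (Sn n) (F'n n) := Submodule.span (Sn n) (JSet n)

/-- The module `Kₙ = F' / span_S{x_{st}·e_{ijkl} : (s,t) ≠ (i,j)}`. -/
abbrev Kn (n : ℕ) := F'n n ⧸ spanJ n

/-- The zero locus in `ℂ^{C(n,2)}` (points indexed by the pairs `(i,j)`, `j < i`)
of an ideal `J ⊆ S`. -/
def zeroLocus (n : ℕ) (J : Ideal (Sn n)) : Set (PIdx n → ℂ) :=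
  { p | ∀ f ∈ J, MvPolynomial.eval p f = 0 }

/-! ### Auxiliary lemmas -/

namespace ZLAux

open MvPolynomial Submodule

variable {n : ℕ}

/-- Membership in the annihilator of a quotient module. -/
lemma mem_ann_iff {M : Type} [AddCommGroup M] [Module (Sn n) M] (N : Submodule (Sn n) M)
    (f : Sn n) :
    f ∈ Module.annihilator (Sn n) (M ⧸ N) ↔ ∀ v : M, f • v ∈ N := by
  rw [Module.mem_annihilator]
  constructor
  · intro h v
    have h2 := h (Submodule.Quotient.mk v)
    rwa [← Submodule.Quotient.mk_smul, Submodule.Quotient.mk_eq_zero] at h2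
  · intro h m
    obtain ⟨v, rfl⟩ := Submodule.Quotient.mk_surjective N m
    rw [← Submodule.Quotient.mk_smul, Submodule.Quotient.mk_eq_zero]
    exact h v

/-- To check `f • v ∈ N` for all `v`, it suffices to check it on the standard basis. -/
lemma smul_mem_of_single {ι : Type} [Fintype ι] [DecidableEq ι]
    (N : Submodule (Sn n) (ι → Sn n)) (f : Sn n)
    (h : ∀ Q : ι, f • (Pi.single Q 1 : ι → Sn n) ∈ N) (v : ι → Sn n) : f • v ∈ N := by
  have hv : v = ∑ Q, Pi.single Q (v Q) := (Finset.univ_sum_single v).symm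
  rw [hv, Finset.smul_sum]
  refine Submodule.sum_mem _ fun Q _ => ?_
  have h1 : Pi.single Q (v Q) = v Q • (Pi.single Q 1 : ι → Sn n) := by
    funext R
    rcases eq_or_ne R Q with rfl | hR
    · simp
    · simp [Pi.single_eq_of_ne hR]
  rw [h1, smul_comm]
  exact Submodule.smul_mem _ _ (h Q)

/-! #### Membership lemmas for the generators of `B` -/

lemma mem_g1 (i j k l : Fin n) (hkj : k < j) (hji : j < i) (h1 : k < l) (h2 : l < j) :
    (-Xv n j k hkj - Xv n l k h1) • rGen n i j l h2 hji
      + Xv n j l h2 • rGen n i j k hkj hji ∈ spanB n :=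
  Submodule.subset_span ⟨i, j, k, hkj, hji, Or.inl ⟨l, h1, h2, rfl⟩⟩

lemma mem_g2 (i j k l : Fin n) (hkj : k < j) (hji : j < i) (h1 : k < l) (h2 : l < j) :
    Xv n j k hkj • rGen n i j l h2 hji
      + Xv n i l (h2.trans hji) • rGen n i j k hkj hji ∈ spanB n :=
  Submodule.subset_span ⟨i, j, k, hkj, hji, Or.inr (Or.inl ⟨l, h1, h2, rfl⟩)⟩

lemma mem_g3 (i j k l : Fin n) (hkj : k < j) (hji : j < i) (h1 : j < l) (h2 : l < i) :
    -(Xv n j k hkj • rGen n i l j h1 h2)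
      + Xv n i l h2 • rGen n i j k hkj hji ∈ spanB n :=
  Submodule.subset_span ⟨i, j, k, hkj, hji, Or.inr (Or.inr (Or.inl ⟨l, h1, h2, rfl⟩))⟩

lemma mem_g4 (i j k l : Fin n) (hkj : k < j) (hji : j < i) (h1 : i < l) :
    Xv n j k hkj • rGen n l i j hji h1
      + Xv n l i h1 • rGen n i j k hkj hji ∈ spanB n :=
  Submodule.subset_span ⟨i, j, k, hkj, hji, Or.inr (Or.inr (Or.inr (Or.inl ⟨l, h1, rfl⟩)))⟩

lemma mem_h3 (i j k l : Fin n) (hkj : k < j) (hji : j < i) (h1 : k < l) (h2 : l < j) :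
    Xv n l k h1 • rGen n i j k hkj hji ∈ spanB n :=
  Submodule.subset_span ⟨i, j, k, hkj, hji, Or.inr (Or.inr (Or.inr (Or.inr (Or.inr
    (Or.inr (Or.inl ⟨l, h1, h2, rfl⟩))))))⟩

lemma mem_h4 (i j k l : Fin n) (hkj : k < j) (hji : j < i) (h1 : j < l) (h2 : l < i) :
    Xv n l k (hkj.trans h1) • rGen n i j k hkj hji ∈ spanB n :=
  Submodule.subset_span ⟨i, j, k, hkj, hji, Or.inr (Or.inr (Or.inr (Or.inr (Or.inr
    (Or.inr (Or.inr (Or.inl ⟨l, h1, h2, rfl⟩)))))))⟩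

lemma mem_h5 (i j k l : Fin n) (hkj : k < j) (hji : j < i) (h1 : j < l) (h2 : l < i) :
    Xv n l j h1 • rGen n i j k hkj hji ∈ spanB n :=
  Submodule.subset_span ⟨i, j, k, hkj, hji, Or.inr (Or.inr (Or.inr (Or.inr (Or.inr
    (Or.inr (Or.inr (Or.inr (Or.inl ⟨l, h1, h2, rfl⟩))))))))⟩

lemma mem_h6 (i j k l : Fin n) (hkj : k < j) (hji : j < i) (h1 : i < l) :
    Xv n l k ((hkj.trans hji).trans h1) • rGen n i j k hkj hji ∈ spanB n :=
  Submodule.subset_span ⟨i, j, k, hkj, hji, Or.inr (Or.inr (Or.inr (Or.inr (Or.inr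
    (Or.inr (Or.inr (Or.inr (Or.inr (Or.inl ⟨l, h1, rfl⟩)))))))))⟩

lemma mem_h7 (i j k l : Fin n) (hkj : k < j) (hji : j < i) (h1 : i < l) :
    Xv n l j (hji.trans h1) • rGen n i j k hkj hji ∈ spanB n :=
  Submodule.subset_span ⟨i, j, k, hkj, hji, Or.inr (Or.inr (Or.inr (Or.inr (Or.inr
    (Or.inr (Or.inr (Or.inr (Or.inr (Or.inr (Or.inl ⟨l, h1, rfl⟩))))))))))⟩

lemma mem_h8 (i j k s t : Fin n) (hkj : k < j) (hji : j < i) (h : t < s)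
    (h1 : s ≠ i) (h2 : s ≠ j) (h3 : s ≠ k) (h4 : t ≠ i) (h5 : t ≠ j) (h6 : t ≠ k) :
    Xv n s t h • rGen n i j k hkj hji ∈ spanB n :=
  Submodule.subset_span ⟨i, j, k, hkj, hji, Or.inr (Or.inr (Or.inr (Or.inr (Or.inr
    (Or.inr (Or.inr (Or.inr (Or.inr (Or.inr (Or.inr
      ⟨s, t, h, h1, h2, h3, h4, h5, h6, rfl⟩))))))))))⟩

/-- The "kill" lemma: `x_{uv} · r_{abc} ∈ span B` under suitable index conditions. -/
lemma kill (a b c u v : Fin n) (hcb : c < b) (hba : b < a) (hvu : v < u)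
    (hua : u ≠ a) (hub : u ≠ b) (hva : v ≠ a) (hx : u ≠ c ∨ v = b) :
    Xv n u v hvu • rGen n a b c hcb hba ∈ spanB n := by
  by_cases hvb : v = b
  · subst hvb
    rcases lt_or_gt_of_ne hua with h | h
    · exact mem_h5 a v c u hcb hba hvu h
    · exact mem_h7 a v c u hcb hba h
  by_cases hvc : v = c
  · subst hvc
    rcases lt_trichotomy u b with h | h | h
    · exact mem_h3 a b v u hcb hba hvu h
    · exact absurd h hub
    · rcases lt_trichotomy u a with h' | h' | h'
      · exact mem_h4 a b v u hcb hba h h'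
      · exact absurd h' hua
      · exact mem_h6 a b v u hcb hba h'
  · have huc : u ≠ c := by
      rcases hx with h | h
      · exact h
      · exact absurd h hvb
    exact mem_h8 a b c u v hcb hba hvu hua hub huc hva hvb hvc

/-! #### `x_{uv} · (x_{kq} · r_{ijk}) ∈ span B` for `(u,v) ≠ (i,j)` -/

lemma routeC1 (i j k q u v : Fin n) (hqk : q < k) (hkj : k < j) (hji : j < i) (hvu : v < u)
    (huj : u ≠ j) (huk : u ≠ k) (hvj : v ≠ j) (hx : u ≠ q ∨ v = k) :
    Xv n u v hvu • (Xv n k q hqk • rGen n i j k hkj hji) ∈ spanB n := by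
  have hw2 := mem_g4 j k q i hqk hkj hji
  have hm : Xv n u v hvu • rGen n j k q hqk hkj ∈ spanB n :=
    kill j k q u v hqk hkj hvu huj huk hvj hx
  have key : Xv n u v hvu • (Xv n k q hqk • rGen n i j k hkj hji)
      = Xv n u v hvu • (Xv n k q hqk • rGen n i j k hkj hji
          + Xv n i j hji • rGen n j k q hqk hkj)
        - Xv n i j hji • (Xv n u v hvu • rGen n j k q hqk hkj) := by
    module
  rw [key]
  exact sub_mem (Submodule.smul_mem _ _ hw2) (Submodule.smul_mem _ _ hm)

lemma routeC2 (i j k q u v : Fin n) (hqk : q < k) (hkj : k < j) (hji : j < i) (hvu : v < u)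
    (hui : u ≠ i) (huk : u ≠ k) (hvi : v ≠ i) (hx : u ≠ q ∨ v = k) :
    Xv n u v hvu • (Xv n k q hqk • rGen n i j k hkj hji) ∈ spanB n := by
  have hw1 := mem_g3 i k q j hqk (hkj.trans hji) hkj hji
  have hm : Xv n u v hvu • rGen n i k q hqk (hkj.trans hji) ∈ spanB n :=
    kill i k q u v hqk (hkj.trans hji) hvu hui huk hvi hx
  have key : Xv n u v hvu • (Xv n k q hqk • rGen n i j k hkj hji)
      = -(Xv n u v hvu • (-(Xv n k q hqk • rGen n i j k hkj hji)
          + Xv n i j hji • rGen n i k q hqk (hkj.trans hji)))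
        + Xv n i j hji • (Xv n u v hvu • rGen n i k q hqk (hkj.trans hji)) := by
    module
  rw [key]
  exact add_mem (neg_mem (Submodule.smul_mem _ _ hw1)) (Submodule.smul_mem _ _ hm)

lemma routeC3 (i j k q u v : Fin n) (hqk : q < k) (hkj : k < j) (hji : j < i) (hvu : v < u)
    (hui : u ≠ i) (huj : u ≠ j) (hvi : v ≠ i) (hx : u ≠ q ∨ v = j) :
    Xv n u v hvu • (Xv n k q hqk • rGen n i j k hkj hji) ∈ spanB n := by
  have hqj : q < j := hqk.trans hkj
  have hwa := mem_g1 i j q k hqj hji hqk hkj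
  have hwb := mem_g2 i j q k hqj hji hqk hkj
  have hm : Xv n u v hvu • rGen n i j q hqj hji ∈ spanB n :=
    kill i j q u v hqj hji hvu hui huj hvi hx
  have key : Xv n u v hvu • (Xv n k q hqk • rGen n i j k hkj hji)
      = -(Xv n u v hvu • ((-Xv n j q hqj - Xv n k q hqk) • rGen n i j k hkj hji
          + Xv n j k hkj • rGen n i j q hqj hji))
        - Xv n u v hvu • (Xv n j q hqj • rGen n i j k hkj hji
          + Xv n i k (hkj.trans hji) • rGen n i j q hqj hji)
        + Xv n j k hkj • (Xv n u v hvu • rGen n i j q hqj hji)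
        + Xv n i k (hkj.trans hji) • (Xv n u v hvu • rGen n i j q hqj hji) := by
    module
  rw [key]
  exact add_mem (add_mem (sub_mem (neg_mem (Submodule.smul_mem _ _ hwa))
    (Submodule.smul_mem _ _ hwb)) (Submodule.smul_mem _ _ hm)) (Submodule.smul_mem _ _ hm)

lemma routeC4 (i j k q u v : Fin n) (hqk : q < k) (hkj : k < j) (hji : j < i) (hvu : v < u)
    (hui : u ≠ i) (huj : u ≠ j) (hvi : v ≠ i) (hx : u ≠ k ∨ v = j) :
    Xv n u v hvu • (Xv n k q hqk • rGen n i j k hkj hji) ∈ spanB n := by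
  have hm : Xv n u v hvu • rGen n i j k hkj hji ∈ spanB n :=
    kill i j k u v hkj hji hvu hui huj hvi hx
  rw [smul_comm]
  exact Submodule.smul_mem _ _ hm

/-- Main combinatorial lemma: every variable other than `x_{ij}` multiplies
`x_{kq} · r_{ijk}` into `span B`. -/
lemma E_smul (i j k q u v : Fin n) (hqk : q < k) (hkj : k < j) (hji : j < i)
    (hvu : v < u) (hne : (u, v) ≠ (i, j)) :
    Xv n u v hvu • (Xv n k q hqk • rGen n i j k hkj hji) ∈ spanB n := by
  have hki : k < i := hkj.trans hji
  by_cases hui : u = i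
  · subst hui
    have hvj : v ≠ j := fun h => hne (by rw [h])
    exact routeC1 u j k q u v hqk hkj hji hvu (ne_of_gt hji) (ne_of_gt hki) hvj
      (Or.inl (ne_of_gt (hqk.trans hki)))
  by_cases huj : u = j
  · subst huj
    exact routeC2 i u k q u v hqk hkj hji hvu hui (ne_of_gt hkj)
      (ne_of_lt (hvu.trans hji)) (Or.inl (ne_of_gt (hqk.trans hkj)))
  by_cases huk : u = k
  · subst huk
    exact routeC3 i j u q u v hqk hkj hji hvu hui huj
      (ne_of_lt ((hvu.trans hkj).trans hji)) (Or.inl (ne_of_gt hqk))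
  by_cases hvi : v = i
  · subst hvi
    exact routeC1 v j k q u v hqk hkj hji hvu huj huk (ne_of_gt hji)
      (Or.inl (ne_of_gt ((hqk.trans hki).trans hvu)))
  by_cases hvj : v = j
  · subst hvj
    exact routeC2 i v k q u v hqk hkj hji hvu hui huk (ne_of_lt hji)
      (Or.inl (ne_of_gt ((hqk.trans hkj).trans hvu)))
  · exact routeC4 i j k q u v hqk hkj hji hvu hui huj hvi (Or.inl huk)

lemma E_smulP (a : PIdx n) (i j k q : Fin n) (hqk : q < k) (hkj : k < j) (hji : j < i)
    (hne : (a : Fin n × Fin n) ≠ (i, j)) :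
    (MvPolynomial.X a : Sn n) • (Xv n k q hqk • rGen n i j k hkj hji) ∈ spanB n := by
  obtain ⟨⟨u, v⟩, hvu⟩ := a
  show Xv n u v hvu • (Xv n k q hqk • rGen n i j k hkj hji) ∈ spanB n
  exact E_smul i j k q u v hqk hkj hji hvu (by simpa using hne)

/-- Multiplying `span B'` into `span B`. -/
lemma smul_spanB' (g : Sn n) (hg : ∀ w ∈ ESet n, g • w ∈ spanB n)
    {w : Fn n} (hw : w ∈ spanB' n) : g • w ∈ spanB n := by
  induction hw using Submodule.span_induction with
  | mem x hx =>
    rcases hx with hB | hE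
    · exact Submodule.smul_mem _ _ (Submodule.subset_span hB)
    · exact hg x hE
  | zero => simp
  | add x y _ _ hx hy => rw [smul_add]; exact add_mem hx hy
  | smul c x _ hx => rw [smul_comm]; exact Submodule.smul_mem _ _ hx

lemma pair_smul_E (a b : PIdx n) (hab : a ≠ b) {w : Fn n} (hw : w ∈ ESet n) :
    (MvPolynomial.X a * MvPolynomial.X b : Sn n) • w ∈ spanB n := by
  obtain ⟨i, j, k, hkj, hji, q, hq, rfl⟩ := hw
  by_cases ha : (a : Fin n × Fin n) = (i, j)
  · have hb : (b : Fin n × Fin n) ≠ (i, j) := fun h => hab (Subtype.ext (ha.trans h.symm))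
    rw [mul_smul]
    exact Submodule.smul_mem _ _ (E_smulP b i j k q hq hkj hji hb)
  · rw [mul_comm, mul_smul]
    exact Submodule.smul_mem _ _ (E_smulP a i j k q hq hkj hji ha)

lemma s0_smul_E' (a : PIdx n) (h0 : (a : Fin n × Fin n).2.val = 0)
    {w : Fn n} (hw : w ∈ ESet n) : (MvPolynomial.X a : Sn n) • w ∈ spanB n := by
  obtain ⟨i, j, k, hkj, hji, q, hq, rfl⟩ := hw
  refine E_smulP a i j k q hq hkj hji ?_
  intro h
  have h2 : (a : Fin n × Fin n).2 = j := congrArg Prod.snd h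
  have h3 := hq
  have h4 := hkj
  rw [Fin.lt_def] at h3 h4
  rw [h2] at h0
  omega

/-! #### The component projection at a triple `(s,t,0)` -/

lemma component_mem (s t : Fin n) (hts : t < s) (h0t : 0 < t.val) (hn0 : 0 < n)
    {w : Fn n} (hw : w ∈ BSet n ∪ ESet n) :
    w ⟨(s, t, ⟨0, hn0⟩), by simpa [Fin.lt_def] using h0t, hts⟩ ∈
      Ideal.span {f : Sn n | ∃ b : PIdx n, b ≠ ⟨(s, t), hts⟩ ∧ f = MvPolynomial.X b} := by
  set I : Ideal (Sn n) :=
    Ideal.span {f : Sn n | ∃ b : PIdx n, b ≠ ⟨(s, t), hts⟩ ∧ f = MvPolynomial.X b} with hI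
  have memI : ∀ (u v : Fin n) (h : v < u), (u ≠ s ∨ v ≠ t) → Xv n u v h ∈ I := by
    intro u v h hne
    refine Ideal.subset_span ⟨⟨(u, v), h⟩, ?_, rfl⟩
    intro he
    simp only [Subtype.mk.injEq, Prod.mk.injEq] at he
    rcases hne with h' | h'
    · exact h' he.1
    · exact h' he.2
  have hz0 : ¬ ∃ (c : Fin n), c < (⟨0, hn0⟩ : Fin n) := by
    rintro ⟨c, hc⟩
    have h2 : c.val < 0 := hc
    omega
  rcases hw with hB | hE
  · obtain ⟨i, j, k, hkj, hji, hc⟩ := hB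
    rcases hc with ⟨l, h1, h2, rfl⟩ | ⟨l, h1, h2, rfl⟩ | ⟨l, h1, h2, rfl⟩ | ⟨l, h1, rfl⟩ |
      ⟨l, h1, rfl⟩ | rfl | ⟨l, h1, h2, rfl⟩ | ⟨l, h1, h2, rfl⟩ | ⟨l, h1, h2, rfl⟩ |
      ⟨l, h1, rfl⟩ | ⟨l, h1, rfl⟩ | ⟨u', t', h', hs1, hs2, hs3, ht1, ht2, ht3, rfl⟩
    -- g1
    · simp only [rGen, Pi.add_apply, Pi.smul_apply, Pi.single_apply, smul_eq_mul,
        mul_ite, mul_one, mul_zero]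
      refine add_mem ?_ ?_ <;> split_ifs with hA <;>
        simp only [Subtype.mk.injEq, Prod.mk.injEq] at hA
      · obtain ⟨rfl, rfl, rfl⟩ := hA
        exact absurd ⟨k, h1⟩ hz0
      · exact zero_mem I
      · obtain ⟨rfl, rfl, rfl⟩ := hA
        exact memI _ _ _ (Or.inl (ne_of_lt hts))
      · exact zero_mem I
    -- g2
    · simp only [rGen, Pi.add_apply, Pi.smul_apply, Pi.single_apply, smul_eq_mul,
        mul_ite, mul_one, mul_zero]
      refine add_mem ?_ ?_ <;> split_ifs with hA <;>
        simp only [Subtype.mk.injEq, Prod.mk.injEq] at hA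
      · obtain ⟨rfl, rfl, rfl⟩ := hA
        exact absurd ⟨k, h1⟩ hz0
      · exact zero_mem I
      · obtain ⟨rfl, rfl, rfl⟩ := hA
        exact memI _ _ _ (Or.inr (ne_of_lt h2))
      · exact zero_mem I
    -- g3
    · simp only [rGen, Pi.add_apply, Pi.neg_apply, Pi.smul_apply, Pi.single_apply,
        smul_eq_mul, mul_ite, mul_one, mul_zero]
      refine add_mem (neg_mem ?_) ?_ <;> split_ifs with hA <;>
        simp only [Subtype.mk.injEq, Prod.mk.injEq] at hA
      · obtain ⟨rfl, rfl, rfl⟩ := hA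
        exact absurd ⟨k, hkj⟩ hz0
      · exact zero_mem I
      · obtain ⟨rfl, rfl, rfl⟩ := hA
        exact memI _ _ _ (Or.inr (ne_of_gt h1))
      · exact zero_mem I
    -- g4
    · simp only [rGen, Pi.add_apply, Pi.smul_apply, Pi.single_apply, smul_eq_mul,
        mul_ite, mul_one, mul_zero]
      refine add_mem ?_ ?_ <;> split_ifs with hA <;>
        simp only [Subtype.mk.injEq, Prod.mk.injEq] at hA
      · obtain ⟨rfl, rfl, rfl⟩ := hA
        exact absurd ⟨k, hkj⟩ hz0
      · exact zero_mem I
      · obtain ⟨rfl, rfl, rfl⟩ := hA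
        exact memI _ _ _ (Or.inl (ne_of_gt h1))
      · exact zero_mem I
    -- h1
    · simp only [rGen, Pi.smul_apply, Pi.single_apply, smul_eq_mul, mul_ite, mul_one,
        mul_zero]
      split_ifs with hA
      · simp only [Subtype.mk.injEq, Prod.mk.injEq] at hA
        obtain ⟨rfl, rfl, rfl⟩ := hA
        exact absurd ⟨l, h1⟩ hz0
      · exact zero_mem I
    -- h2
    · simp only [rGen, Pi.smul_apply, Pi.single_apply, smul_eq_mul, mul_ite, mul_one,
        mul_zero]
      split_ifs with hA
      · simp only [Subtype.mk.injEq, Prod.mk.injEq] at hA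
        obtain ⟨rfl, rfl, rfl⟩ := hA
        refine add_mem (memI _ _ _ ?_) (memI _ _ _ ?_) <;>
          exact Or.inr (fun hh => by rw [← hh] at h0t; exact absurd h0t (by simp))
      · exact zero_mem I
    -- h3
    · simp only [rGen, Pi.smul_apply, Pi.single_apply, smul_eq_mul, mul_ite, mul_one,
        mul_zero]
      split_ifs with hA
      · simp only [Subtype.mk.injEq, Prod.mk.injEq] at hA
        obtain ⟨rfl, rfl, rfl⟩ := hA
        exact memI _ _ _ (Or.inr (fun hh => by rw [← hh] at h0t; exact absurd h0t (by simp)))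
      · exact zero_mem I
    -- h4
    · simp only [rGen, Pi.smul_apply, Pi.single_apply, smul_eq_mul, mul_ite, mul_one,
        mul_zero]
      split_ifs with hA
      · simp only [Subtype.mk.injEq, Prod.mk.injEq] at hA
        obtain ⟨rfl, rfl, rfl⟩ := hA
        exact memI _ _ _ (Or.inr (fun hh => by rw [← hh] at h0t; exact absurd h0t (by simp)))
      · exact zero_mem I
    -- h5
    · simp only [rGen, Pi.smul_apply, Pi.single_apply, smul_eq_mul, mul_ite, mul_one,
        mul_zero]
      split_ifs with hA
      · simp only [Subtype.mk.injEq, Prod.mk.injEq] at hA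
        obtain ⟨rfl, rfl, rfl⟩ := hA
        exact memI _ _ _ (Or.inl (ne_of_lt h2))
      · exact zero_mem I
    -- h6
    · simp only [rGen, Pi.smul_apply, Pi.single_apply, smul_eq_mul, mul_ite, mul_one,
        mul_zero]
      split_ifs with hA
      · simp only [Subtype.mk.injEq, Prod.mk.injEq] at hA
        obtain ⟨rfl, rfl, rfl⟩ := hA
        exact memI _ _ _ (Or.inr (fun hh => by rw [← hh] at h0t; exact absurd h0t (by simp)))
      · exact zero_mem I
    -- h7
    · simp only [rGen, Pi.smul_apply, Pi.single_apply, smul_eq_mul, mul_ite, mul_one,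
        mul_zero]
      split_ifs with hA
      · simp only [Subtype.mk.injEq, Prod.mk.injEq] at hA
        obtain ⟨rfl, rfl, rfl⟩ := hA
        exact memI _ _ _ (Or.inl (ne_of_gt h1))
      · exact zero_mem I
    -- h8
    · simp only [rGen, Pi.smul_apply, Pi.single_apply, smul_eq_mul, mul_ite, mul_one,
        mul_zero]
      split_ifs with hA
      · simp only [Subtype.mk.injEq, Prod.mk.injEq] at hA
        obtain ⟨rfl, rfl, rfl⟩ := hA
        exact memI _ _ _ (Or.inl hs1)
      · exact zero_mem I
  · obtain ⟨i, j, k, hkj, hji, q, hq, rfl⟩ := hE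
    simp only [rGen, Pi.smul_apply, Pi.single_apply, smul_eq_mul, mul_ite, mul_one,
      mul_zero]
    split_ifs with hA
    · simp only [Subtype.mk.injEq, Prod.mk.injEq] at hA
      obtain ⟨rfl, rfl, rfl⟩ := hA
      exact absurd ⟨q, hq⟩ hz0
    · exact zero_mem I
/-- If `f` multiplies `rGen s t 0` into `span B'` and `p` is supported at `(s,t)`
(with `t ≥ 1`), then `f` vanishes at `p`. -/
lemma eval_single (s t : Fin n) (hts : t < s) (h0t : 0 < t.val) (hn0 : 0 < n)
    (p : PIdx n → ℂ) (hp : ∀ b : PIdx n, b ≠ ⟨(s, t), hts⟩ → p b = 0)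
    (f : Sn n)
    (hf : f • rGen n s t ⟨0, hn0⟩ (by simpa [Fin.lt_def] using h0t) hts ∈ spanB' n) :
    MvPolynomial.eval p f = 0 := by
  set I : Ideal (Sn n) :=
    Ideal.span {g : Sn n | ∃ b : PIdx n, b ≠ ⟨(s, t), hts⟩ ∧ g = MvPolynomial.X b} with hI
  set T0 : TIdx n := ⟨(s, t, ⟨0, hn0⟩), by simpa [Fin.lt_def] using h0t, hts⟩ with hT0
  have hle : spanB' n ≤ Submodule.comap (LinearMap.proj T0 : Fn n →ₗ[Sn n] Sn n) I :=
    Submodule.span_le.mpr fun w hw => component_mem s t hts h0t hn0 hw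
  have hfI : f ∈ I := by
    have h2 := hle hf
    simp only [Submodule.mem_comap, LinearMap.proj_apply] at h2
    rwa [rGen, Pi.smul_apply, Pi.single_eq_same, smul_eq_mul, mul_one] at h2
  have hker : I ≤ RingHom.ker (MvPolynomial.eval p) := by
    rw [hI, Ideal.span_le]
    rintro g ⟨b, hb, rfl⟩
    simpa [RingHom.mem_ker] using hp b hb
  exact (RingHom.mem_ker).mp (hker hfI)

/-! #### Elements of the annihilator of `Kₙ` -/

lemma X_smul_single_spanJ (a : PIdx n) (i j k l : Fin n)
    (h1 : l < k) (h2 : k < j) (h3 : j < i) (ha : (a : Fin n × Fin n) ≠ (i, j)) :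
    (MvPolynomial.X a : Sn n) •
      (Pi.single (⟨(i, j, k, l), h1, h2, h3⟩ : QIdx n) 1 : F'n n) ∈ spanJ n := by
  obtain ⟨⟨u, v⟩, hvu⟩ := a
  exact Submodule.subset_span
    ⟨i, j, k, l, h1, h2, h3, u, v, hvu, by simpa using ha, rfl⟩

lemma pair_mem_annK (a b : PIdx n) (hab : a ≠ b) :
    (MvPolynomial.X a * MvPolynomial.X b : Sn n) ∈ Module.annihilator (Sn n) (Kn n) := by
  rw [mem_ann_iff]
  intro v
  refine smul_mem_of_single _ _ (fun Q => ?_) v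
  obtain ⟨⟨i, j, k, l⟩, h1, h2, h3⟩ := Q
  by_cases ha : (a : Fin n × Fin n) = (i, j)
  · have hb : (b : Fin n × Fin n) ≠ (i, j) := fun h => hab (Subtype.ext (ha.trans h.symm))
    rw [mul_smul]
    exact Submodule.smul_mem _ _ (X_smul_single_spanJ b i j k l h1 h2 h3 hb)
  · rw [mul_comm, mul_smul]
    exact Submodule.smul_mem _ _ (X_smul_single_spanJ a i j k l h1 h2 h3 ha)

lemma low_mem_annK (a : PIdx n) (ht : (a : Fin n × Fin n).2.val < 2) :
    (MvPolynomial.X a : Sn n) ∈ Module.annihilator (Sn n) (Kn n) := by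
  rw [mem_ann_iff]
  intro v
  refine smul_mem_of_single _ _ (fun Q => ?_) v
  obtain ⟨⟨i, j, k, l⟩, h1, h2, h3⟩ := Q
  refine X_smul_single_spanJ a i j k l h1 h2 h3 ?_
  intro h
  have hj : (a : Fin n × Fin n).2 = j := congrArg Prod.snd h
  have h1' : l.val < k.val := h1
  have h2' : k.val < j.val := h2
  rw [hj] at ht
  omega

lemma annB_le_annB' :
    Module.annihilator (Sn n) (Bn n) ≤ Module.annihilator (Sn n) (Bn' n) := by
  intro f hf
  rw [mem_ann_iff] at hf ⊢
  intro v
  exact Submodule.span_mono Set.subset_union_left (hf v)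

end ZLAux

theorem zeroLocus_annihilators (n : ℕ) (hn : 4 ≤ n) :
    zeroLocus n (Module.annihilator (Sn n) (Kn n)) ⊆
      zeroLocus n (Module.annihilator (Sn n) (Bn n)) ∧
    zeroLocus n (Module.annihilator (Sn n) (Bn n)) =
      zeroLocus n (Module.annihilator (Sn n) (Bn' n)) := by
  classical
  have hn0 : 0 < n := by omega
  have hBB' : ∀ f ∈ Module.annihilator (Sn n) (Bn n), ∀ v : Fn n, f • v ∈ spanB' n := by
    intro f hf v
    exact Submodule.span_mono Set.subset_union_left ((ZLAux.mem_ann_iff _ f).mp hf v)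
  constructor
  · -- Z(Ann Kₙ) ⊆ Z(Ann 𝔅ₙ)
    intro p hp f hf
    by_cases hex : ∃ a : PIdx n, p a ≠ 0
    · obtain ⟨a, ha⟩ := hex
      obtain ⟨⟨s, t⟩, hts⟩ := a
      have ht2 : 2 ≤ t.val := by
        by_contra h
        exact ha (by simpa using hp _ (ZLAux.low_mem_annK ⟨(s, t), hts⟩ (by show t.val < 2; omega)))
      have hsing : ∀ b : PIdx n, b ≠ ⟨(s, t), hts⟩ → p b = 0 := by
        intro b hb
        have h0 := hp _ (ZLAux.pair_mem_annK b ⟨(s, t), hts⟩ hb)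
        rw [map_mul, MvPolynomial.eval_X, MvPolynomial.eval_X] at h0
        exact (mul_eq_zero.mp h0).resolve_right ha
      exact ZLAux.eval_single s t hts (by omega) hn0 p hsing f (hBB' f hf _)
    · push_neg at hex
      exact ZLAux.eval_single (⟨2, by omega⟩ : Fin n) ⟨1, by omega⟩
        (by simp [Fin.lt_def]) (by norm_num) hn0 p (fun b _ => hex b) f (hBB' f hf _)
  · refine Set.Subset.antisymm ?_ ?_
    · -- Z(Ann 𝔅ₙ) ⊆ Z(Ann 𝔅ₙ')
      intro p hp f hf
      have hfB' : ∀ v : Fn n, f • v ∈ spanB' n := (ZLAux.mem_ann_iff _ f).mp hf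
      by_cases hex2 : ∃ a b : PIdx n, a ≠ b ∧ p a ≠ 0 ∧ p b ≠ 0
      · obtain ⟨a, b, hab, ha, hb⟩ := hex2
        have hmem : (MvPolynomial.X a * MvPolynomial.X b * f)
            ∈ Module.annihilator (Sn n) (Bn n) := by
          rw [ZLAux.mem_ann_iff]
          intro v
          rw [mul_smul]
          exact ZLAux.smul_spanB' _ (fun w hw => ZLAux.pair_smul_E a b hab hw) (hfB' v)
        have h0 := hp _ hmem
        rw [map_mul, map_mul, MvPolynomial.eval_X, MvPolynomial.eval_X] at h0
        rcases mul_eq_zero.mp h0 with h | h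
        · exact absurd ((mul_eq_zero.mp h).resolve_left ha) hb
        · exact h
      · by_cases hex : ∃ a : PIdx n, p a ≠ 0
        · obtain ⟨a, ha⟩ := hex
          have hsing : ∀ b : PIdx n, b ≠ a → p b = 0 := by
            intro b hb
            by_contra h
            exact hex2 ⟨b, a, hb, h, ha⟩
          obtain ⟨⟨s, t⟩, hts⟩ := a
          by_cases ht : t.val = 0
          · have hmem : (MvPolynomial.X (⟨(s, t), hts⟩ : PIdx n) * f)
                ∈ Module.annihilator (Sn n) (Bn n) := by
              rw [ZLAux.mem_ann_iff]
              intro v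
              rw [mul_smul]
              exact ZLAux.smul_spanB' _
                (fun w hw => ZLAux.s0_smul_E' ⟨(s, t), hts⟩ ht hw) (hfB' v)
            have h0 := hp _ hmem
            rw [map_mul, MvPolynomial.eval_X] at h0
            exact (mul_eq_zero.mp h0).resolve_left ha
          · exact ZLAux.eval_single s t hts (by omega) hn0 p hsing f (hfB' _)
        · push_neg at hex
          exact ZLAux.eval_single (⟨2, by omega⟩ : Fin n) ⟨1, by omega⟩
            (by simp [Fin.lt_def]) (by norm_num) hn0 p (fun b _ => hex b) f (hfB' _)
    · -- Z(Ann 𝔅ₙ') ⊆ Z(Ann 𝔅ₙ)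
      intro p hp f hf
      exact hp f (ZLAux.annB_le_annB' hf)
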